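/- Let r ≥ 1 and let Ẽ be a subset of ℤ^r (i.e., of Fin r → ℤ) such that 0 ∉ Ẽ, Ẽ = −Ẽ, Ẽ generates ℤ^r as an abelian group, and every r-element ℚ-linearly independent subset of Ẽ generates ℤ^r. If e₁, e₂ ∈ Ẽ are congruent modulo 2 (i.e., e₁ − e₂ ∈ 2ℤ^r), then e₂ = e₁ or e₂ = −e₁. Consequently reduction modulo 2 maps Ẽ two-to-one onto its image in (ZMod 2)^r. -/

import Mathlib

open Submodule Set

open Submodule Set

noncomputable def phi (r : ℕ) : (Fin r → ℤ) →ₗ[ℤ] (Fin r → ℚ) where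
  toFun v := fun i => (v i : ℚ)
  map_add' v w := by funext i; push_cast [Pi.add_apply]; ring
  map_smul' n v := by
    funext i
    simp [Pi.smul_apply, zsmul_eq_mul]

lemma phi_inj (r : ℕ) : Function.Injective (phi r) := by
  intro v w h
  funext i
  have := congrFun h i
  simp only [phi, LinearMap.coe_mk, AddHom.coe_mk] at this
  exact_mod_cast this

lemma span_eq_top_of_closure {r : ℕ} {s : Set (Fin r → ℤ)}
    (h : AddSubgroup.closure s = ⊤) : Submodule.span ℤ s = ⊤ := by
  rw [eq_top_iff]
  intro x _
  have hx : x ∈ (Submodule.span ℤ s).toAddSubgroup := by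
    rw [Submodule.span_int_eq_addSubgroupClosure, h]; trivial
  exact hx

lemma spanQ_top {r : ℕ} {s : Set (Fin r → ℤ)} (h : Submodule.span ℤ s = ⊤) :
    Submodule.span ℚ (phi r '' s) = ⊤ := by
  rw [eq_top_iff, ← (Pi.basisFun ℚ (Fin r)).span_eq, Submodule.span_le]
  rintro x ⟨i, rfl⟩
  have h1 : (Pi.single i 1 : Fin r → ℤ) ∈ Submodule.span ℤ s := by rw [h]; trivial
  have h2 : phi r (Pi.single i 1) ∈ Submodule.map (phi r) (Submodule.span ℤ s) :=
    ⟨_, h1, rfl⟩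
  rw [Submodule.map_span] at h2
  have h3 : Submodule.span ℤ (phi r '' s) ≤
      Submodule.restrictScalars ℤ (Submodule.span ℚ (phi r '' s)) :=
    Submodule.span_le.2 Submodule.subset_span
  have h4 := h3 h2
  have h5 : Pi.basisFun ℚ (Fin r) i = phi r (Pi.single i 1) := by
    funext j
    simp [phi, Pi.basisFun_apply, Pi.single_apply]
  rw [h5]
  exact h4



/-- The conditions defining elements of `IR(r, ℤ)`: a subset `Ẽ` of `ℤ^r` with `0 ∉ Ẽ`,
`Ẽ = -Ẽ`, generating `ℤ^r` as an abelian group, and such that every `r`-element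
`ℚ`-linearly independent subset of `Ẽ` generates `ℤ^r`. -/
def Unimodular (r : ℕ) (E : Set (Fin r → ℤ)) : Prop :=
  0 ∉ E ∧ E = -E ∧ AddSubgroup.closure E = ⊤ ∧
    ∀ S ⊆ E, S.ncard = r →
      LinearIndependent ℚ (fun s : S => fun i => ((s : Fin r → ℤ) i : ℚ)) →
      AddSubgroup.closure S = ⊤

theorem key (r : ℕ) (hr : 1 ≤ r) (E : Set (Fin r → ℤ)) (hE : Unimodular r E)
    (e₁ e₂ : Fin r → ℤ) (h₁ : e₁ ∈ E) (h₂ : e₂ ∈ E)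
    (hpar : ∀ i, (2:ℤ) ∣ (e₁ i - e₂ i)) : ∃ k : ℤ, e₂ = k • e₁ := by
  classical
  obtain ⟨hE0, hEneg, hEgen, hU⟩ := hE
  have hspanE : Submodule.span ℤ E = ⊤ := span_eq_top_of_closure hEgen
  have hQE : Submodule.span ℚ (phi r '' E) = ⊤ := spanQ_top hspanE
  have he₁ne : e₁ ≠ 0 := fun h => hE0 (h ▸ h₁)
  have hphie₁ : phi r e₁ ≠ 0 := fun h => he₁ne (phi_inj r (h.trans (map_zero _).symm))
  have hsingle : LinearIndependent ℚ ((↑) : ({phi r e₁} : Set (Fin r → ℚ)) → (Fin r → ℚ)) :=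
    (linearIndepOn_singleton_iff (R := ℚ) (v := id) (i := phi r e₁)).2 hphie₁
  obtain ⟨b, hbsub, hsb, hbspan', hbind⟩ :=
    exists_linearIndepOn_id_extension hsingle
      (show ({phi r e₁} : Set (Fin r → ℚ)) ⊆ phi r '' E from
        Set.singleton_subset_iff.2 ⟨e₁, h₁, rfl⟩)
  have hbspan : Submodule.span ℚ b = ⊤ := by
    rw [eq_top_iff, ← hQE]
    exact Submodule.span_le.2 hbspan'
  let Bb : Module.Basis b ℚ (Fin r → ℚ) :=
    Module.Basis.mk hbind (by rw [show (fun x : b => id (x : Fin r → ℚ)) = Subtype.val from rfl, Subtype.range_coe]; exact hbspan.ge)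
  haveI : Fintype b := FiniteDimensional.fintypeBasisIndex Bb
  have hbfin : b.Finite := b.toFinite
  have hbcard : b.ncard = r := by
    have h1 : Module.finrank ℚ (Fin r → ℚ) = Fintype.card b :=
      Module.finrank_eq_card_basis Bb
    have h2 : Module.finrank ℚ (Fin r → ℚ) = r := by
      simp [Module.finrank_fintype_fun_eq_card]
    rw [Set.ncard_eq_toFinset_card' b]
    simp [← h1, h2]
  set S : Set (Fin r → ℤ) := E ∩ (phi r) ⁻¹' b with hSdef
  have hSsub : S ⊆ E := Set.inter_subset_left
  have himg : phi r '' S = b := by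
    apply Set.Subset.antisymm
    · rintro x ⟨y, ⟨-, hy⟩, rfl⟩; exact hy
    · intro x hx
      obtain ⟨e, he, rfl⟩ := hbsub hx
      exact ⟨e, ⟨he, hx⟩, rfl⟩
  have hSfin : S.Finite :=
    Set.Finite.of_finite_image (himg ▸ hbfin) ((phi_inj r).injOn)
  have hScard : S.ncard = r := by
    have h6 := Set.ncard_image_of_injective S (phi_inj r)
    rw [himg] at h6
    rw [← h6, hbcard]
  have he₁S : e₁ ∈ S := ⟨h₁, hsb rfl⟩
  -- linear independence of S over ℚ
  have hSindQ : LinearIndependent ℚ (fun s : S => phi r s) := by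
    rw [show LinearIndependent ℚ (fun s : S => phi r s) ↔ _ from linearIndepOn_iff_image ((phi_inj r).injOn)]
    rw [himg]
    exact hbind
  have hSclosure : AddSubgroup.closure S = ⊤ := hU S hSsub hScard hSindQ
  have hSspan : Submodule.span ℤ S = ⊤ := span_eq_top_of_closure hSclosure
  have hsmul_inj : Function.Injective (fun n : ℤ => n • (1 : ℚ)) := by
    intro a c h
    simp only [Int.smul_one_eq_cast] at h
    exact_mod_cast h
  have hSindZ : LinearIndependent ℤ ((↑) : S → (Fin r → ℤ)) := by
    have h1 : LinearIndependent ℤ (fun s : S => phi r s) :=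
      hSindQ.restrict_scalars hsmul_inj
    exact LinearIndependent.of_comp (phi r) h1
  haveI : Fintype S := hSfin.fintype
  let B : Module.Basis S ℤ (Fin r → ℤ) :=
    Module.Basis.mk hSindZ (by rw [Subtype.range_coe]; exact hSspan.ge)
  have hBapp : ∀ s : S, B s = (s : Fin r → ℤ) := fun s => Module.Basis.mk_apply _ _ s
  set c : S →₀ ℤ := B.repr e₂ with hcdef
  -- parity of coordinates
  choose d hd using hpar
  have he₂eq : e₂ = e₁ - (2 : ℤ) • (fun i => d i) := by
    funext i
    simp only [Pi.sub_apply, Pi.smul_apply, smul_eq_mul]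
    have := hd i
    linarith
  have hrepr₁ : B.repr e₁ = Finsupp.single ⟨e₁, he₁S⟩ 1 := by
    have h := B.repr_self ⟨e₁, he₁S⟩
    rw [hBapp] at h
    exact h
  have hceval : ∀ s : S, c s = (Finsupp.single ⟨e₁, he₁S⟩ 1 : S →₀ ℤ) s
      - 2 * (B.repr (fun i => d i)) s := by
    intro s
    rw [hcdef, he₂eq, map_sub, map_smul, ← hrepr₁]
    simp
  have hceven : ∀ s : S, s ≠ ⟨e₁, he₁S⟩ → (2 : ℤ) ∣ c s := by
    intro s hs
    rw [hceval s, Finsupp.single_eq_of_ne' (Ne.symm hs)]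
    exact ⟨-(B.repr (fun i => d i)) s, by ring⟩
  have hsum : e₂ = ∑ s : S, c s • (s : Fin r → ℤ) := by
    conv_lhs => rw [← B.sum_repr e₂]
    refine Finset.sum_congr rfl fun s _ => ?_
    rw [hBapp]
  by_cases he₂S : e₂ ∈ S
  · -- e₂ is itself a basis element; parity forces e₂ = e₁
    have hrepr₂ : c = Finsupp.single ⟨e₂, he₂S⟩ 1 := by
      have h := B.repr_self ⟨e₂, he₂S⟩
      rw [hBapp] at h
      rw [hcdef]
      exact h
    by_cases heq : (⟨e₂, he₂S⟩ : S) = ⟨e₁, he₁S⟩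
    · refine ⟨1, ?_⟩
      have : e₂ = e₁ := congrArg Subtype.val heq
      rw [this, one_smul]
    · exfalso
      have h2 := hceven ⟨e₂, he₂S⟩ heq
      rw [hrepr₂, Finsupp.single_eq_same] at h2
      omega
  · -- exchange argument: all coordinates away from e₁ vanish
    have hzero : ∀ s : S, s ≠ ⟨e₁, he₁S⟩ → c s = 0 := by
      intro s₀ hs₀ne
      by_contra hcs0
      set S' : Set (Fin r → ℤ) := insert e₂ (S \ {(s₀ : Fin r → ℤ)}) with hS'def
      have hs₀S : (s₀ : Fin r → ℤ) ∈ S := s₀.2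
      have hS'sub : S' ⊆ E := by
        rintro x (rfl | ⟨hx, -⟩)
        · exact h₂
        · exact hSsub hx
      have he₂notin : e₂ ∉ S \ {(s₀ : Fin r → ℤ)} := fun h => he₂S h.1
      have hS'fin : S'.Finite := (hSfin.subset Set.diff_subset).insert e₂
      have hS'card : S'.ncard = r := by
        rw [hS'def, Set.ncard_insert_of_notMem he₂notin (hSfin.subset Set.diff_subset),
          Set.ncard_diff_singleton_of_mem hs₀S, hScard]
        omega
      have hsumQ : phi r e₂ = ∑ s : S, (c s : ℚ) • phi r (s : Fin r → ℤ) := by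
        conv_lhs => rw [hsum]
        rw [map_sum]
        refine Finset.sum_congr rfl fun s _ => ?_
        rw [map_smul, Int.cast_smul_eq_zsmul ℚ]
      have hmem_s₀ : phi r (s₀ : Fin r → ℤ) ∈ Submodule.span ℚ (phi r '' S') := by
        have hsplit : (c s₀ : ℚ) • phi r (s₀ : Fin r → ℤ)
            = phi r e₂ - ∑ s ∈ Finset.univ.erase s₀, (c s : ℚ) • phi r (s : Fin r → ℤ) := by
          rw [hsumQ, ← Finset.sum_erase_add Finset.univ _ (Finset.mem_univ s₀)]
          abel
        have hne : (c s₀ : ℚ) ≠ 0 := Int.cast_ne_zero.2 hcs0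
        have h1 : phi r (s₀ : Fin r → ℤ)
            = (c s₀ : ℚ)⁻¹ • ((c s₀ : ℚ) • phi r (s₀ : Fin r → ℤ)) := by
          rw [smul_smul, inv_mul_cancel₀ hne, one_smul]
        rw [h1, hsplit]
        refine Submodule.smul_mem _ _ (Submodule.sub_mem _ ?_ ?_)
        · exact Submodule.subset_span ⟨e₂, Set.mem_insert _ _, rfl⟩
        · refine Submodule.sum_mem _ fun s hs => ?_
          refine Submodule.smul_mem _ _ (Submodule.subset_span ?_)
          refine ⟨(s : Fin r → ℤ), Set.mem_insert_of_mem _ ⟨s.2, ?_⟩, rfl⟩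
          intro h
          exact (Finset.ne_of_mem_erase hs) (Subtype.coe_injective h)
      have hspan'Q : Submodule.span ℚ (phi r '' S') = ⊤ := by
        rw [eq_top_iff, ← spanQ_top hSspan, Submodule.span_le]
        rintro x ⟨y, hyS, rfl⟩
        by_cases hy : y = (s₀ : Fin r → ℤ)
        · rw [hy]; exact hmem_s₀
        · exact Submodule.subset_span ⟨y, Set.mem_insert_of_mem _ ⟨hyS, hy⟩, rfl⟩
      haveI : Fintype S' := hS'fin.fintype
      have hcard' : Fintype.card S' = Module.finrank ℚ (Fin r → ℚ) := by
        have h7 : Fintype.card S' = S'.ncard := by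
          rw [← Nat.card_coe_set_eq, Nat.card_eq_fintype_card]
        rw [h7, hS'card, Module.finrank_fintype_fun_eq_card, Fintype.card_fin]
      have hindS' : LinearIndependent ℚ (fun x : S' => phi r (x : Fin r → ℤ)) := by
        apply linearIndependent_of_top_le_span_of_card_eq_finrank
        · rw [← Set.image_eq_range, hspan'Q]
        · exact hcard'
      have hS'closure := hU S' hS'sub hS'card hindS'
      have hS'span : Submodule.span ℤ S' = ⊤ := span_eq_top_of_closure hS'closure
      have hmem : (s₀ : Fin r → ℤ)
          ∈ Submodule.span ℤ (insert e₂ (S \ {(s₀ : Fin r → ℤ)})) := by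
        rw [← hS'def, hS'span]; trivial
      rw [Submodule.mem_span_insert] at hmem
      obtain ⟨a, z, hz, heq⟩ := hmem
      have hz0 : B.repr z s₀ = 0 := by
        have hle : Submodule.span ℤ (S \ {(s₀ : Fin r → ℤ)})
            ≤ LinearMap.ker (B.coord s₀) := by
          rw [Submodule.span_le]
          rintro y ⟨hyS, hy⟩
          simp only [SetLike.mem_coe, LinearMap.mem_ker, Module.Basis.coord_apply]
          have h := B.repr_self ⟨y, hyS⟩
          rw [hBapp] at h
          rw [h, Finsupp.single_eq_of_ne']
          intro hcon
          exact hy (Set.mem_singleton_iff.2 (congrArg Subtype.val hcon))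
        have := hle hz
        simpa [Module.Basis.coord_apply] using this
      have h1 : (1 : ℤ) = a * c s₀ + B.repr z s₀ := by
        have h := congrArg (fun v => B.repr v s₀) heq
        simp only [map_add, map_smul, Finsupp.add_apply, Finsupp.smul_apply,
          smul_eq_mul] at h
        have hself := B.repr_self s₀
        rw [hBapp] at hself
        rw [hself, Finsupp.single_eq_same] at h
        exact h
      rw [hz0, add_zero] at h1
      have hunit : IsUnit (c s₀) := IsUnit.of_mul_eq_one a (by linarith)
      have h2 := hceven s₀ hs₀ne
      rcases Int.isUnit_iff.1 hunit with h | h <;> omega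
    refine ⟨c ⟨e₁, he₁S⟩, ?_⟩
    rw [hsum, Finset.sum_eq_single (⟨e₁, he₁S⟩ : S)]
    · intro s _ hs
      rw [hzero s hs, zero_smul]
    · intro h; exact absurd (Finset.mem_univ _) h

/-- If `Ẽ ⊆ ℤ^r` satisfies the conditions of `IR(r, ℤ)`, then any two elements of `Ẽ`
congruent modulo `2` are equal or opposite; consequently reduction modulo `2` maps `Ẽ`
two-to-one onto its image in `(ZMod 2)^r`. -/
theorem unimodular_two_to_one_mod_two (r : ℕ) (hr : 1 ≤ r) (E : Set (Fin r → ℤ))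
    (hE : Unimodular r E) :
    (∀ e₁ ∈ E, ∀ e₂ ∈ E, (∀ i, (2 : ℤ) ∣ (e₁ i - e₂ i)) → e₂ = e₁ ∨ e₂ = -e₁) ∧
    ∀ e ∈ E,
      {x ∈ E | (fun i => ((x i : ℤ) : ZMod 2)) = fun i => ((e i : ℤ) : ZMod 2)}.encard
        = 2 := by
  have part1 : ∀ e₁ ∈ E, ∀ e₂ ∈ E,
      (∀ i, (2 : ℤ) ∣ (e₁ i - e₂ i)) → e₂ = e₁ ∨ e₂ = -e₁ := by
    intro e₁ h₁ e₂ h₂ hpar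
    obtain ⟨k, hk⟩ := key r hr E hE e₁ e₂ h₁ h₂ hpar
    obtain ⟨k', hk'⟩ := key r hr E hE e₂ e₁ h₂ h₁ (fun i => by
      obtain ⟨m, hm⟩ := hpar i; exact ⟨-m, by linarith⟩)
    have he₂ne : e₂ ≠ 0 := fun h => hE.1 (h ▸ h₂)
    have hloop : e₂ = (k * k') • e₂ := by
      rw [mul_smul, ← hk']; exact hk
    obtain ⟨i, hi⟩ : ∃ i, e₂ i ≠ 0 := by
      by_contra h; push_neg at h; exact he₂ne (funext h)
    have heq := congrFun hloop i
    simp only [Pi.smul_apply, smul_eq_mul] at heq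
    have h0 : (k * k' - 1) * e₂ i = 0 := by linear_combination -heq
    have hkk' : k * k' = 1 := by
      rcases mul_eq_zero.1 h0 with h | h
      · omega
      · exact absurd h hi
    rcases Int.isUnit_iff.1 (IsUnit.of_mul_eq_one _ hkk') with h | h
    · left; rw [hk, h, one_smul]
    · right; rw [hk, h, neg_smul, one_smul]
  refine ⟨part1, ?_⟩
  intro e he
  have hene : e ≠ -e := by
    intro h
    have he0 : e = 0 := by
      funext i
      have := congrFun h i
      simp only [Pi.neg_apply] at this
      simp only [Pi.zero_apply]
      omega
    exact hE.1 (he0 ▸ he)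
  have hpair : {x ∈ E | (fun i => ((x i : ℤ) : ZMod 2)) = fun i => ((e i : ℤ) : ZMod 2)}
      = {e, -e} := by
    ext x
    simp only [Set.mem_setOf_eq, Set.mem_insert_iff, Set.mem_singleton_iff]
    constructor
    · rintro ⟨hxE, hx⟩
      have hpar : ∀ i, (2 : ℤ) ∣ (e i - x i) := by
        intro i
        have h := congrFun hx i
        have h2 : (x i : ℤ) ≡ (e i : ℤ) [ZMOD (2 : ℕ)] :=
          (ZMod.intCast_eq_intCast_iff _ _ _).1 h
        exact_mod_cast h2.dvd
      exact part1 e he x hxE hpar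
    · rintro (rfl | rfl)
      · exact ⟨he, rfl⟩
      · refine ⟨?_, ?_⟩
        · rw [hE.2.1]; exact Set.neg_mem_neg.2 he
        · funext i
          simp only [Pi.neg_apply, Int.cast_neg]
          exact CharTwo.neg_eq _
  rw [hpair]
  exact Set.encard_pair hene
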